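/- If θ·S₁ is a positive integer with θ ∈ (0,1), then for any 0 < ε < θ²·S₁, the hypergeometric tail sum satisfies: ∑_{t ≥ (θ+ε)·θ·S₁} C(θS₁, t)·C(S₁−θS₁, θS₁−t) / C(S₁, θS₁) ≤ exp(−2ε²·θ·S₁). -/

import Mathlib

open Finset

lemma cheb_wt (s : Finset ℕ) (w f g : ℕ → ℝ) (hw : ∀ i ∈ s, 0 ≤ w i)
    (hfg : ∀ i ∈ s, ∀ j ∈ s, 0 ≤ (f i - f j) * (g i - g j)) :
    (∑ i ∈ s, w i * f i) * (∑ i ∈ s, w i * g i) ≤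
      (∑ i ∈ s, w i) * (∑ i ∈ s, w i * (f i * g i)) := by
  have key : 0 ≤ ∑ i ∈ s, ∑ j ∈ s, w i * w j * ((f i - f j) * (g i - g j)) := by
    apply Finset.sum_nonneg; intro i hi
    apply Finset.sum_nonneg; intro j hj
    exact mul_nonneg (mul_nonneg (hw i hi) (hw j hj)) (hfg i hi j hj)
  have h1 : ∀ i, ∑ j ∈ s, w i * w j * ((f i - f j) * (g i - g j))
      = w i * (f i * g i) * (∑ j ∈ s, w j) + w i * (∑ j ∈ s, w j * (f j * g j))
        - w i * f i * (∑ j ∈ s, w j * g j) - w i * g i * (∑ j ∈ s, w j * f j) := by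
    intro i
    simp only [Finset.mul_sum, ← Finset.sum_add_distrib, ← Finset.sum_sub_distrib]
    apply Finset.sum_congr rfl; intros; ring
  have expand : ∑ i ∈ s, ∑ j ∈ s, w i * w j * ((f i - f j) * (g i - g j)) =
      2 * ((∑ i ∈ s, w i) * (∑ i ∈ s, w i * (f i * g i))
        - (∑ i ∈ s, w i * f i) * (∑ i ∈ s, w i * g i)) := by
    rw [Finset.sum_congr rfl (fun i _ => h1 i), Finset.sum_sub_distrib,
      Finset.sum_sub_distrib, Finset.sum_add_distrib,
      ← Finset.sum_mul, ← Finset.sum_mul, ← Finset.sum_mul, ← Finset.sum_mul]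
    ring
  rw [expand] at key
  linarith

/-- Real-valued Vandermonde over a range. -/
lemma vand (K L r : ℕ) :
    ∑ t ∈ range (r + 1), (K.choose t : ℝ) * (L.choose (r - t) : ℝ)
      = ((K + L).choose r : ℝ) := by
  rw [Nat.add_choose_eq]
  rw [Finset.Nat.sum_antidiagonal_eq_sum_range_succ_mk]
  push_cast
  rfl

/-- First moment identity. -/
lemma momt (K L n : ℕ) :
    ∑ t ∈ range (n + 2), (t : ℝ) * (K.choose t : ℝ) * (L.choose (n + 1 - t) : ℝ)
      = (K : ℝ) * (((K - 1) + L).choose n : ℝ) := by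
  cases K with
  | zero =>
    simp only [Nat.cast_zero, zero_mul]
    apply Finset.sum_eq_zero; intro t ht
    rcases Nat.eq_zero_or_pos t with h | h
    · simp [h]
    · have : Nat.choose 0 t = 0 := Nat.choose_eq_zero_of_lt h
      simp [this]
  | succ K' =>
    rw [Finset.sum_range_succ' (fun t => (t : ℝ) * ((K' + 1).choose t : ℝ)
        * (L.choose (n + 1 - t) : ℝ))]
    push_cast
    simp only [zero_mul, add_zero]
    calc ∑ s ∈ range (n + 1), ((s : ℝ) + 1) * ((K' + 1).choose (s + 1) : ℝ)
          * (L.choose (n - s) : ℝ)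
        = ∑ s ∈ range (n + 1), ((K' : ℝ) + 1) * ((K'.choose s : ℝ) * (L.choose (n - s) : ℝ)) := by
          apply Finset.sum_congr rfl; intro s hs
          have h2 : ((K' + 1) * K'.choose s : ℕ) = ((K' + 1).choose (s + 1) * (s + 1) : ℕ) :=
            Nat.add_one_mul_choose_eq K' s
          have h3 := congrArg (fun x : ℕ => (x : ℝ)) h2
          push_cast at h3
          nlinarith [h3]
      _ = ((K' : ℝ) + 1) * (((K' + L).choose n : ℝ)) := by
          rw [← Finset.mul_sum, vand K' L n]
      _ = ((K' : ℝ) + 1) * (((K' + 1 - 1) + L).choose n : ℝ) := by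
          norm_num

lemma choose_step_real (K s : ℕ) :
    ((s : ℝ) + 1) * (K.choose (s + 1) : ℝ) = ((K : ℝ) - s) * (K.choose s : ℝ) := by
  rcases le_or_gt (s + 1) K with h | h
  · have h2 : (K.choose (s + 1) * (s + 1) : ℕ) = (K.choose s * (K - s) : ℕ) :=
      Nat.choose_succ_right_eq K s
    have h3 := congrArg (fun y : ℕ => (y : ℝ)) h2
    push_cast [Nat.cast_sub (by omega : s ≤ K)] at h3
    nlinarith [h3]
  · rcases le_or_gt s K with h4 | h4
    · have hks : K = s := by omega
      subst hks
      simp [Nat.choose_succ_self]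
    · simp [Nat.choose_eq_zero_of_lt h4, Nat.choose_eq_zero_of_lt (by omega : K < s + 1)]

lemma mgf (K L : ℕ) (x : ℝ) (hx : 1 ≤ x) :
    ∀ n, n ≤ K + L →
    ((K + L : ℕ) : ℝ) ^ n * (∑ t ∈ Finset.range (n + 1),
        (K.choose t : ℝ) * (L.choose (n - t) : ℝ) * x ^ t)
      ≤ ((K + L).choose n : ℝ) * (((K + L : ℕ) : ℝ) + (K : ℝ) * (x - 1)) ^ n := by
  intro n
  induction n with
  | zero => intro _; simp
  | succ n ih =>
    intro hn1
    have hn : n ≤ K + L := by omega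
    have hN0 : 0 < K + L := by omega
    have hxpos : 0 < x := by linarith
    set N : ℕ := K + L with hNdef
    set U : ℝ := ∑ t ∈ Finset.range (n + 1),
      (K.choose t : ℝ) * (L.choose (n - t) : ℝ) * x ^ t with hU
    set V : ℝ := ∑ t ∈ Finset.range (n + 1),
      (t : ℝ) * ((K.choose t : ℝ) * (L.choose (n - t) : ℝ) * x ^ t) with hV
    set U1 : ℝ := ∑ t ∈ Finset.range (n + 1 + 1),
      (K.choose t : ℝ) * (L.choose (n + 1 - t) : ℝ) * x ^ t with hU1
    have hLcast : (L : ℝ) = (N : ℝ) - K := by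
      rw [hNdef]; push_cast; ring
    -- A sum
    have hA : ∑ t ∈ Finset.range (n + 2),
        (t : ℝ) * ((K.choose t : ℝ) * (L.choose (n + 1 - t) : ℝ) * x ^ t)
        = x * ((K : ℝ) * U - V) := by
      rw [Finset.sum_range_succ' (fun t => (t : ℝ) *
        ((K.choose t : ℝ) * (L.choose (n + 1 - t) : ℝ) * x ^ t)) (n + 1)]
      simp only [Nat.cast_zero, zero_mul, add_zero]
      have hterm : ∀ s ∈ Finset.range (n + 1),
          ((s + 1 : ℕ) : ℝ) * ((K.choose (s + 1) : ℝ) * (L.choose (n + 1 - (s + 1)) : ℝ) * x ^ (s + 1))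
          = x * (((K : ℝ) - s) * ((K.choose s : ℝ) * (L.choose (n - s) : ℝ) * x ^ s)) := by
        intro s hs
        rw [show n + 1 - (s + 1) = n - s from by omega]
        have h := choose_step_real K s
        push_cast
        linear_combination ((L.choose (n - s) : ℝ) * x ^ (s + 1)) * h
      rw [Finset.sum_congr rfl hterm, ← Finset.mul_sum]
      congr 1
      rw [hU, hV, Finset.mul_sum, ← Finset.sum_sub_distrib]
      apply Finset.sum_congr rfl; intros; ring
    -- B sum
    have hB : ∑ t ∈ Finset.range (n + 2),
        (((n : ℝ) + 1) - t) * ((K.choose t : ℝ) * (L.choose (n + 1 - t) : ℝ) * x ^ t)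
        = ((L : ℝ) - n) * U + V := by
      rw [Finset.sum_range_succ]
      have hzero : (((n : ℝ) + 1) - ((n + 1 : ℕ) : ℝ)) = 0 := by push_cast; ring
      rw [hzero, zero_mul, add_zero]
      have hterm : ∀ t ∈ Finset.range (n + 1),
          (((n : ℝ) + 1) - t) * ((K.choose t : ℝ) * (L.choose (n + 1 - t) : ℝ) * x ^ t)
          = ((L : ℝ) - n + t) * ((K.choose t : ℝ) * (L.choose (n - t) : ℝ) * x ^ t) := by
        intro t ht
        have htn : t ≤ n := by simpa [Nat.lt_succ_iff] using ht
        rw [show n + 1 - t = (n - t) + 1 from by omega]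
        have h := choose_step_real L (n - t)
        have hcast : ((n - t : ℕ) : ℝ) = (n : ℝ) - t := by
          push_cast [Nat.cast_sub htn]; ring
        rw [hcast] at h
        have hexp : ((n : ℝ) + 1) - t = ((n : ℝ) - t) + 1 := by ring
        rw [hexp]
        linear_combination ((K.choose t : ℝ) * x ^ t) * h
      rw [Finset.sum_congr rfl hterm]
      rw [hU, hV, Finset.mul_sum, ← Finset.sum_add_distrib]
      apply Finset.sum_congr rfl; intros; ring
    -- key identity
    have hkey : ((n : ℝ) + 1) * U1 = ((K : ℝ) * x + (L : ℝ) - n) * U - (x - 1) * V := by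
      have hsplit : ((n : ℝ) + 1) * U1
          = (∑ t ∈ Finset.range (n + 2),
              (t : ℝ) * ((K.choose t : ℝ) * (L.choose (n + 1 - t) : ℝ) * x ^ t))
          + (∑ t ∈ Finset.range (n + 2),
              (((n : ℝ) + 1) - t) * ((K.choose t : ℝ) * (L.choose (n + 1 - t) : ℝ) * x ^ t)) := by
        rw [hU1, Finset.mul_sum, ← Finset.sum_add_distrib]
        apply Finset.sum_congr rfl; intros; ring
      rw [hsplit, hA, hB]; ring
    -- nonnegativity
    have hUnn : 0 ≤ U := by
      rw [hU]; apply Finset.sum_nonneg; intro t _; positivity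
    have hU1nn : 0 ≤ U1 := by
      rw [hU1]; apply Finset.sum_nonneg; intro t _; positivity
    have hVnn : 0 ≤ V := by
      rw [hV]; apply Finset.sum_nonneg; intro t _; positivity
    -- Chebyshev bound : K * n * U ≤ N * V
    have hcheb : (K : ℝ) * n * U ≤ (N : ℝ) * V := by
      rcases Nat.eq_zero_or_pos n with hn0 | hnpos
      · subst hn0
        have hV0 : V = 0 := by rw [hV]; simp
        simp [hV0]
      · rcases Nat.eq_zero_or_pos K with hK0 | hKpos
        · have hKc : (K : ℝ) = 0 := by rw [hK0]; norm_num
          rw [hKc, zero_mul, zero_mul]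
          exact mul_nonneg (by positivity) hVnn
        · obtain ⟨n', rfl⟩ : ∃ n', n = n' + 1 := ⟨n - 1, by omega⟩
          have hch := cheb_wt (Finset.range (n' + 2))
            (fun t => (K.choose t : ℝ) * (L.choose (n' + 1 - t) : ℝ))
            (fun t => (t : ℝ)) (fun t => x ^ t)
            (by intro i _; positivity)
            (by
              intro i _ j _
              rcases le_total i j with hij | hij
              · have h1 : (i : ℝ) - j ≤ 0 := by
                  have := Nat.cast_le (α := ℝ).mpr hij; linarith
                have h2 : x ^ i ≤ x ^ j := pow_le_pow_right₀ hx hij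
                nlinarith
              · have h1 : (0 : ℝ) ≤ (i : ℝ) - j := by
                  have := Nat.cast_le (α := ℝ).mpr hij; linarith
                have h2 : x ^ j ≤ x ^ i := pow_le_pow_right₀ hx hij
                nlinarith)
          -- rewrite the four sums
          have e1 : (∑ t ∈ Finset.range (n' + 2),
              ((K.choose t : ℝ) * (L.choose (n' + 1 - t) : ℝ)) * (t : ℝ))
              = (K : ℝ) * (((K - 1) + L).choose n' : ℝ) := by
            rw [← momt K L n']
            apply Finset.sum_congr rfl; intros; ring
          have e2 : (∑ t ∈ Finset.range (n' + 2),
              ((K.choose t : ℝ) * (L.choose (n' + 1 - t) : ℝ)) * x ^ t) = U := by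
            rw [hU]
          have e3 : (∑ t ∈ Finset.range (n' + 2),
              ((K.choose t : ℝ) * (L.choose (n' + 1 - t) : ℝ))) = (N.choose (n' + 1) : ℝ) := by
            rw [hNdef, ← vand K L (n' + 1)]
          have e4 : (∑ t ∈ Finset.range (n' + 2),
              ((K.choose t : ℝ) * (L.choose (n' + 1 - t) : ℝ)) * ((t : ℝ) * x ^ t)) = V := by
            rw [hV]; apply Finset.sum_congr rfl; intros; ring
          rw [e1, e2, e3, e4] at hch
          -- N * C(N-1, n') = C(N, n'+1) * (n'+1), with N - 1 = (K-1) + L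
          have hid : (N * ((K - 1 + L).choose n') : ℕ) = (N.choose (n' + 1) * (n' + 1) : ℕ) := by
            have := Nat.add_one_mul_choose_eq (N - 1) n'
            rw [show N - 1 + 1 = N from by omega] at this
            rw [show N - 1 = K - 1 + L from by omega] at this
            exact this
          have hidR := congrArg (fun y : ℕ => (y : ℝ)) hid
          push_cast at hidR
          -- multiply hch by N ≥ 0 and substitute
          have hNnn : (0 : ℝ) ≤ N := by positivity
          have hch2 := mul_le_mul_of_nonneg_left hch hNnn
          have hCpos : (0 : ℝ) < (N.choose (n' + 1) : ℝ) := by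
            have : 0 < N.choose (n' + 1) := Nat.choose_pos (by omega)
            exact_mod_cast this
          have hgoal : (K : ℝ) * ((n' : ℝ) + 1) * U * (N.choose (n' + 1) : ℝ)
              ≤ ((N : ℝ) * V) * (N.choose (n' + 1) : ℝ) := by
            calc (K : ℝ) * ((n' : ℝ) + 1) * U * (N.choose (n' + 1) : ℝ)
                = (N : ℝ) * ((K : ℝ) * (((K - 1) + L).choose n' : ℝ) * U) := by
                  linear_combination (-(K : ℝ) * U) * hidR
              _ ≤ (N : ℝ) * ((N.choose (n' + 1) : ℝ) * V) := hch2
              _ = ((N : ℝ) * V) * (N.choose (n' + 1) : ℝ) := by ring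
          have hfin2 := le_of_mul_le_mul_right hgoal hCpos
          push_cast
          exact hfin2
    -- step inequality
    have hstep : (N : ℝ) * (((n : ℝ) + 1) * U1)
        ≤ (((N : ℝ) - n) * ((N : ℝ) + (K : ℝ) * (x - 1))) * U := by
      rw [hkey]
      have h2 : (x - 1) * ((K : ℝ) * n * U) ≤ (x - 1) * ((N : ℝ) * V) :=
        mul_le_mul_of_nonneg_left hcheb (by linarith)
      have hid2 : (N : ℝ) * (((K : ℝ) * x + (L : ℝ) - n) * U) - (x - 1) * ((K : ℝ) * n * U)
          = (((N : ℝ) - n) * ((N : ℝ) + (K : ℝ) * (x - 1))) * U := by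
        rw [hLcast]; ring
      linarith [h2, hid2]
    -- combine with IH
    have ihh := ih hn
    have hNKu : (0 : ℝ) ≤ (N : ℝ) + (K : ℝ) * (x - 1) := by
      have : (0:ℝ) ≤ (K : ℝ) * (x - 1) := by
        apply mul_nonneg; positivity; linarith
      positivity
    have hNn : (0 : ℝ) ≤ (N : ℝ) - n := by
      have : (n : ℝ) ≤ N := by exact_mod_cast hn
      linarith
    have hNpow : (0 : ℝ) ≤ (N : ℝ) ^ n := by positivity
    -- multiply hstep by N^n
    have hstep2 : (N : ℝ) ^ n * ((N : ℝ) * (((n : ℝ) + 1) * U1))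
        ≤ (((N : ℝ) - n) * ((N : ℝ) + (K : ℝ) * (x - 1))) * ((N : ℝ) ^ n * U) := by
      calc (N : ℝ) ^ n * ((N : ℝ) * (((n : ℝ) + 1) * U1))
          ≤ (N : ℝ) ^ n * ((((N : ℝ) - n) * ((N : ℝ) + (K : ℝ) * (x - 1))) * U) :=
            mul_le_mul_of_nonneg_left hstep hNpow
        _ = (((N : ℝ) - n) * ((N : ℝ) + (K : ℝ) * (x - 1))) * ((N : ℝ) ^ n * U) := by ring
    have hstep3 : (((N : ℝ) - n) * ((N : ℝ) + (K : ℝ) * (x - 1))) * ((N : ℝ) ^ n * U)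
        ≤ (((N : ℝ) - n) * ((N : ℝ) + (K : ℝ) * (x - 1))) *
          ((N.choose n : ℝ) * (((N : ℝ) + (K : ℝ) * (x - 1)) ^ n)) :=
      mul_le_mul_of_nonneg_left ihh (mul_nonneg hNn hNKu)
    -- (N - n) * C(N,n) = (n+1) * C(N,n+1)
    have hid3 : (N.choose (n + 1) * (n + 1) : ℕ) = (N.choose n * (N - n) : ℕ) :=
      Nat.choose_succ_right_eq N n
    have hid3R := congrArg (fun y : ℕ => (y : ℝ)) hid3
    push_cast [Nat.cast_sub hn] at hid3R
    -- conclude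
    have hfin : ((n : ℝ) + 1) * ((N : ℝ) ^ (n + 1) * U1)
        ≤ ((n : ℝ) + 1) * ((N.choose (n + 1) : ℝ) * (((N : ℝ) + (K : ℝ) * (x - 1)) ^ (n + 1))) := by
      have lhs_eq : ((n : ℝ) + 1) * ((N : ℝ) ^ (n + 1) * U1)
          = (N : ℝ) ^ n * ((N : ℝ) * (((n : ℝ) + 1) * U1)) := by ring
      have rhs_eq : (((N : ℝ) - n) * ((N : ℝ) + (K : ℝ) * (x - 1))) *
          ((N.choose n : ℝ) * (((N : ℝ) + (K : ℝ) * (x - 1)) ^ n))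
          = (((N : ℝ) - n) * (N.choose n : ℝ)) *
            (((N : ℝ) + (K : ℝ) * (x - 1)) ^ (n + 1)) := by ring
      rw [lhs_eq]
      calc (N : ℝ) ^ n * ((N : ℝ) * (((n : ℝ) + 1) * U1))
          ≤ (((N : ℝ) - n) * ((N : ℝ) + (K : ℝ) * (x - 1))) * ((N : ℝ) ^ n * U) := hstep2
        _ ≤ (((N : ℝ) - n) * ((N : ℝ) + (K : ℝ) * (x - 1))) *
            ((N.choose n : ℝ) * (((N : ℝ) + (K : ℝ) * (x - 1)) ^ n)) := hstep3
        _ = (((N : ℝ) - n) * (N.choose n : ℝ)) *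
            (((N : ℝ) + (K : ℝ) * (x - 1)) ^ (n + 1)) := rhs_eq
        _ = ((n : ℝ) + 1) * ((N.choose (n + 1) : ℝ) * (((N : ℝ) + (K : ℝ) * (x - 1)) ^ (n + 1))) := by
            linear_combination (-(((N : ℝ) + (K : ℝ) * (x - 1)) ^ (n + 1))) * hid3R
    have hn1pos : (0 : ℝ) < (n : ℝ) + 1 := by positivity
    exact le_of_mul_le_mul_left hfin hn1pos

lemma pinsker {t a : ℝ} (ht : 0 < t) (hta : t < a) (ha : a < 1) :
    2 * (a - t) ^ 2 ≤ a * Real.log (a / t) + (1 - a) * Real.log ((1 - a) / (1 - t)) := by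
  have ha0 : 0 < a := lt_trans ht hta
  have ha1 : 0 < 1 - a := by linarith
  have ht1 : 0 < 1 - t := by linarith
  set g : ℝ → ℝ := fun y =>
    a * (Real.log a - Real.log y) + (1 - a) * (Real.log (1 - a) - Real.log (1 - y))
      - 2 * (a - y) ^ 2 with hg
  have hderiv : ∀ y ∈ Set.Ioo (0 : ℝ) 1,
      HasDerivAt g (-(a / y) + (1 - a) / (1 - y) + 4 * (a - y)) y := by
    intro y hy
    have hy0 : y ≠ 0 := ne_of_gt hy.1
    have hy1 : (1 : ℝ) - y ≠ 0 := by have := hy.2; intro h; linarith [h]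
    have d1 : HasDerivAt (fun y : ℝ => Real.log y) (1 / y) y := by
      simpa using Real.hasDerivAt_log hy0
    have d2 : HasDerivAt (fun y : ℝ => Real.log (1 - y)) (-(1 / (1 - y))) y := by
      have dinner : HasDerivAt (fun y : ℝ => 1 - y) (-1) y := by
        simpa using (hasDerivAt_id y).const_sub 1
      have := (Real.hasDerivAt_log hy1).comp y dinner
      exact this.congr_deriv (by ring)
    have d3 : HasDerivAt (fun y : ℝ => (a - y) ^ 2) (-(2 * (a - y))) y := by
      have dinner : HasDerivAt (fun y : ℝ => a - y) (-1) y := by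
        simpa using (hasDerivAt_id y).const_sub a
      have h2 := dinner.pow 2
      exact h2.congr_deriv (by norm_num)
    have := (((d1.const_sub (Real.log a)).const_mul a).add
        ((d2.const_sub (Real.log (1 - a))).const_mul (1 - a))).sub (d3.const_mul 2)
    exact this.congr_deriv (by ring)
  have hIccIoo : Set.Icc t a ⊆ Set.Ioo (0 : ℝ) 1 := by
    intro y hy
    exact ⟨lt_of_lt_of_le ht hy.1, lt_of_le_of_lt hy.2 ha⟩
  have hanti : AntitoneOn g (Set.Icc t a) := by
    apply antitoneOn_of_deriv_nonpos (convex_Icc t a)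
    · intro y hy
      exact ((hderiv y (hIccIoo hy)).differentiableAt).continuousAt.continuousWithinAt
    · intro y hy
      rw [interior_Icc] at hy
      exact ((hderiv y (hIccIoo (Set.Ioo_subset_Icc_self hy))).differentiableAt).differentiableWithinAt
    · intro y hy
      rw [interior_Icc] at hy
      have hy' := hIccIoo (Set.Ioo_subset_Icc_self hy)
      rw [(hderiv y hy').deriv]
      have hypos : 0 < y := hy'.1
      have hy1 : 0 < 1 - y := by have := hy'.2; linarith
      have hkey : (-(a / y) + (1 - a) / (1 - y) + 4 * (a - y)) * (y * (1 - y))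
          = (a - y) * (4 * y * (1 - y) - 1) := by
        field_simp
        ring
      have h1 : (a - y) * (4 * y * (1 - y) - 1) ≤ 0 := by
        apply mul_nonpos_of_nonneg_of_nonpos
        · linarith [hy.2]
        · nlinarith [sq_nonneg (2 * y - 1)]
      have hpos : 0 < y * (1 - y) := mul_pos hypos hy1
      by_contra hcon
      rw [not_le] at hcon
      have hcontr : 0 < (-(a / y) + (1 - a) / (1 - y) + 4 * (a - y)) * (y * (1 - y)) :=
        mul_pos hcon hpos
      rw [hkey] at hcontr
      linarith [h1]
  have hga : g a = 0 := by simp [hg]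
  have hgle := hanti (Set.left_mem_Icc.mpr (le_of_lt hta)) (Set.right_mem_Icc.mpr (le_of_lt hta)) (le_of_lt hta)
  rw [hga] at hgle
  have hgt : 0 ≤ g t := hgle
  rw [hg] at hgt
  simp only at hgt
  rw [Real.log_div (ne_of_gt ha0) (ne_of_gt ht), Real.log_div (ne_of_gt ha1) (ne_of_gt ht1)]
  linarith [hgt]

lemma poly_aux (s : ℝ) (h0 : 0 < s) (h1 : s < 1) :
    1 - s < (1 - s ^ 2 / 2) ^ (4 : ℕ) := by
  nlinarith [sq_nonneg (s - 4/5), sq_nonneg (s^2 - 4/5*s), sq_nonneg (s^3 - 4/5*s^2),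
    sq_nonneg (s^2 - 1), sq_nonneg s, sq_nonneg (s^2+s-2), mul_pos h0 h0,
    mul_nonneg (mul_nonneg h0.le h0.le) (sub_nonneg.mpr h1.le),
    sq_nonneg ((1-s)*s), sq_nonneg ((1-s)*s^2), sq_nonneg ((1-s)*s^3)]

lemma theta_lt_exp (t : ℝ) (ht : 0 < t) (ht1 : t < 1) :
    t < Real.exp (-(2 * (1 - t) ^ 2)) := by
  set s : ℝ := 1 - t with hs
  have hs0 : 0 < s := by simp [hs]; linarith
  have hs1 : s < 1 := by simp [hs]; linarith
  set c : ℝ := t ^ ((1 : ℝ) / 4) with hc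
  have hcpos : 0 < c := Real.rpow_pos_of_pos ht _
  have hc4 : c ^ (4 : ℕ) = t := by
    rw [hc, ← Real.rpow_natCast (t ^ ((1 : ℝ) / 4)) 4, ← Real.rpow_mul (le_of_lt ht)]
    norm_num
  have hb : (0 : ℝ) < 1 - s ^ 2 / 2 := by nlinarith
  have hpoly : t < (1 - s ^ 2 / 2) ^ (4 : ℕ) := by
    have hts : t = 1 - s := by rw [hs]; ring
    rw [hts]
    exact poly_aux s hs0 hs1
  have hclt : c < 1 - s ^ 2 / 2 := by
    have h4 : c ^ (4 : ℕ) < (1 - s ^ 2 / 2) ^ (4 : ℕ) := by rw [hc4]; exact hpoly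
    exact lt_of_pow_lt_pow_left₀ 4 (le_of_lt hb) h4
  have hlogt : Real.log t = 4 * Real.log c := by
    rw [← hc4, Real.log_pow]; push_cast; ring
  have hlogc : Real.log c ≤ c - 1 := Real.log_le_sub_one_of_pos hcpos
  have hlt : Real.log t < -(2 * s ^ 2) := by
    rw [hlogt]
    nlinarith [hlogc, hclt]
  calc t = Real.exp (Real.log t) := (Real.exp_log ht).symm
    _ < Real.exp (-(2 * s ^ 2)) := Real.exp_lt_exp.mpr hlt
    _ = Real.exp (-(2 * (1 - t) ^ 2)) := by rw [hs]

/-- Instantiation of the Hoeffding hypergeometric tail bound with parameters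
`Hyper(θS₁, S₁, θS₁)`, where `m = θS₁` is a positive integer. -/
theorem hypergeometric_tail_instantiation (S₁ : ℕ) (hS₁ : 0 < S₁)
    (θ : ℝ) (hθ : 0 < θ) (hθ1 : θ < 1) (m : ℕ) (hm : (m : ℝ) = θ * S₁)
    (hmpos : 0 < m) (ε : ℝ) (hε : 0 < ε) (hεθ : ε < θ ^ 2 * S₁) :
    ∑ t ∈ (Finset.range (m + 1)).filter
        (fun t : ℕ => (θ + ε) * θ * S₁ ≤ (t : ℝ)),
      ((m.choose t : ℝ) * ((S₁ - m).choose (m - t) : ℝ) / (S₁.choose m : ℝ))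
      ≤ Real.exp (-2 * ε ^ 2 * θ * S₁) := by
  have hS₁R : (0 : ℝ) < S₁ := by exact_mod_cast hS₁
  have hmS : m < S₁ := by
    have : (m : ℝ) < S₁ := by rw [hm]; nlinarith
    exact_mod_cast this
  have hKL : m + (S₁ - m) = S₁ := by omega
  have hCpos : (0 : ℝ) < (S₁.choose m : ℝ) := by
    exact_mod_cast Nat.choose_pos (le_of_lt hmS)
  set a : ℝ := θ + ε with ha
  have hθa : θ < a := by rw [ha]; linarith
  have ha0 : 0 < a := lt_trans hθ hθa
  have ham : (θ + ε) * θ * (S₁ : ℝ) = a * (m : ℝ) := by rw [ha, hm]; ring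
  have hmR : (0 : ℝ) < m := by exact_mod_cast hmpos
  set F := (Finset.range (m + 1)).filter (fun t : ℕ => (θ + ε) * θ * S₁ ≤ (t : ℝ)) with hF
  have htail_nonneg : 0 ≤ ∑ t ∈ F,
      ((m.choose t : ℝ) * ((S₁ - m).choose (m - t) : ℝ) / (S₁.choose m : ℝ)) := by
    apply Finset.sum_nonneg; intro t _; positivity
  have hexp_target : Real.exp (-2 * ε ^ 2 * θ * S₁) = Real.exp (-(2 * ε ^ 2)) ^ m := by
    rw [← Real.exp_nat_mul]
    congr 1
    linear_combination (2 * ε ^ 2) * hm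
  -- master Chernoff bound
  have master : ∀ x : ℝ, 1 ≤ x →
      (∑ t ∈ F, ((m.choose t : ℝ) * ((S₁ - m).choose (m - t) : ℝ) / (S₁.choose m : ℝ)))
        * x ^ (a * (m : ℝ)) ≤ (1 - θ + θ * x) ^ m := by
    intro x hx
    have hxpos : 0 < x := lt_of_lt_of_le one_pos hx
    have step1 : (∑ t ∈ F, ((m.choose t : ℝ) * ((S₁ - m).choose (m - t) : ℝ) / (S₁.choose m : ℝ)))
        * x ^ (a * (m : ℝ))
        = ∑ t ∈ F, ((m.choose t : ℝ) * ((S₁ - m).choose (m - t) : ℝ) / (S₁.choose m : ℝ))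
          * x ^ (a * (m : ℝ)) := Finset.sum_mul _ _ _
    have step2 : ∑ t ∈ F, ((m.choose t : ℝ) * ((S₁ - m).choose (m - t) : ℝ) / (S₁.choose m : ℝ))
          * x ^ (a * (m : ℝ))
        ≤ ∑ t ∈ F, ((m.choose t : ℝ) * ((S₁ - m).choose (m - t) : ℝ) / (S₁.choose m : ℝ)) * x ^ t := by
      apply Finset.sum_le_sum
      intro t htF
      rw [hF, Finset.mem_filter] at htF
      have hta : a * (m : ℝ) ≤ (t : ℝ) := by rw [← ham]; exact htF.2
      have hrle : x ^ (a * (m : ℝ)) ≤ x ^ ((t : ℕ) : ℝ) :=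
        Real.rpow_le_rpow_of_exponent_le hx hta
      rw [Real.rpow_natCast] at hrle
      apply mul_le_mul_of_nonneg_left hrle
      positivity
    have step3 : ∑ t ∈ F, ((m.choose t : ℝ) * ((S₁ - m).choose (m - t) : ℝ) / (S₁.choose m : ℝ)) * x ^ t
        ≤ ∑ t ∈ Finset.range (m + 1),
            ((m.choose t : ℝ) * ((S₁ - m).choose (m - t) : ℝ) / (S₁.choose m : ℝ)) * x ^ t := by
      apply Finset.sum_le_sum_of_subset_of_nonneg (Finset.filter_subset _ _)
      intro t _ _; positivity
    have step4 : ∑ t ∈ Finset.range (m + 1),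
          ((m.choose t : ℝ) * ((S₁ - m).choose (m - t) : ℝ) / (S₁.choose m : ℝ)) * x ^ t
        = (∑ t ∈ Finset.range (m + 1),
            (m.choose t : ℝ) * ((S₁ - m).choose (m - t) : ℝ) * x ^ t) / (S₁.choose m : ℝ) := by
      rw [Finset.sum_div]
      apply Finset.sum_congr rfl; intros; ring
    have hmgf := mgf m (S₁ - m) x hx m (by omega)
    rw [hKL] at hmgf
    have hbase : ((S₁ : ℝ) + (m : ℝ) * (x - 1)) ^ m = (S₁ : ℝ) ^ m * (1 - θ + θ * x) ^ m := by
      rw [← mul_pow]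
      congr 1
      linear_combination (x - 1) * hm
    rw [hbase] at hmgf
    have hU : (∑ t ∈ Finset.range (m + 1),
        (m.choose t : ℝ) * ((S₁ - m).choose (m - t) : ℝ) * x ^ t)
        ≤ (S₁.choose m : ℝ) * (1 - θ + θ * x) ^ m := by
      have hSpow : (0 : ℝ) < (S₁ : ℝ) ^ m := by positivity
      have := hmgf
      have h2 : (S₁ : ℝ) ^ m * (∑ t ∈ Finset.range (m + 1),
          (m.choose t : ℝ) * ((S₁ - m).choose (m - t) : ℝ) * x ^ t)
          ≤ (S₁ : ℝ) ^ m * ((S₁.choose m : ℝ) * (1 - θ + θ * x) ^ m) := by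
        calc (S₁ : ℝ) ^ m * (∑ t ∈ Finset.range (m + 1),
            (m.choose t : ℝ) * ((S₁ - m).choose (m - t) : ℝ) * x ^ t)
            ≤ (S₁.choose m : ℝ) * ((S₁ : ℝ) ^ m * (1 - θ + θ * x) ^ m) := hmgf
          _ = (S₁ : ℝ) ^ m * ((S₁.choose m : ℝ) * (1 - θ + θ * x) ^ m) := by ring
      exact le_of_mul_le_mul_left h2 hSpow
    calc (∑ t ∈ F, ((m.choose t : ℝ) * ((S₁ - m).choose (m - t) : ℝ) / (S₁.choose m : ℝ)))
          * x ^ (a * (m : ℝ))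
        = ∑ t ∈ F, ((m.choose t : ℝ) * ((S₁ - m).choose (m - t) : ℝ) / (S₁.choose m : ℝ))
          * x ^ (a * (m : ℝ)) := step1
      _ ≤ ∑ t ∈ F, ((m.choose t : ℝ) * ((S₁ - m).choose (m - t) : ℝ) / (S₁.choose m : ℝ)) * x ^ t := step2
      _ ≤ ∑ t ∈ Finset.range (m + 1),
            ((m.choose t : ℝ) * ((S₁ - m).choose (m - t) : ℝ) / (S₁.choose m : ℝ)) * x ^ t := step3
      _ = (∑ t ∈ Finset.range (m + 1),
            (m.choose t : ℝ) * ((S₁ - m).choose (m - t) : ℝ) * x ^ t) / (S₁.choose m : ℝ) := step4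
      _ ≤ (1 - θ + θ * x) ^ m := by
          rw [div_le_iff₀ hCpos]
          calc (∑ t ∈ Finset.range (m + 1),
              (m.choose t : ℝ) * ((S₁ - m).choose (m - t) : ℝ) * x ^ t)
              ≤ (S₁.choose m : ℝ) * (1 - θ + θ * x) ^ m := hU
            _ = (1 - θ + θ * x) ^ m * (S₁.choose m : ℝ) := by ring
  -- case analysis on a vs 1
  rcases lt_trichotomy a 1 with hlt | heq | hgt
  · -- Chernoff + Pinsker
    have h1θ : (0 : ℝ) < 1 - θ := by linarith
    have h1a : (0 : ℝ) < 1 - a := by linarith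
    set x₀ : ℝ := a * (1 - θ) / ((1 - a) * θ) with hx₀def
    have hden : (0 : ℝ) < (1 - a) * θ := mul_pos h1a hθ
    have hnum : (0 : ℝ) < a * (1 - θ) := mul_pos ha0 h1θ
    have hx₀pos : 0 < x₀ := div_pos hnum hden
    have hx₀ : 1 ≤ x₀ := by
      rw [hx₀def, le_div_iff₀ hden]
      nlinarith
    have hmast := master x₀ hx₀
    have hval : 1 - θ + θ * x₀ = (1 - θ) / (1 - a) := by
      rw [hx₀def]
      field_simp
      ring
    have hrpos : (0 : ℝ) < x₀ ^ (a * (m : ℝ)) := Real.rpow_pos_of_pos hx₀pos _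
    have htail_le : (∑ t ∈ F, ((m.choose t : ℝ) * ((S₁ - m).choose (m - t) : ℝ) / (S₁.choose m : ℝ)))
        ≤ (1 - θ + θ * x₀) ^ m / x₀ ^ (a * (m : ℝ)) := by
      rw [le_div_iff₀ hrpos]
      exact hmast
    have hdiv_pos : (0 : ℝ) < (1 - θ) / (1 - a) := div_pos h1θ h1a
    have hexp_eq : (1 - θ + θ * x₀) ^ m / x₀ ^ (a * (m : ℝ))
        = Real.exp ((m : ℝ) * Real.log ((1 - θ) / (1 - a)) - a * (m : ℝ) * Real.log x₀) := by
      rw [hval, Real.exp_sub]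
      congr 1
      · rw [← Real.log_pow, Real.exp_log (pow_pos hdiv_pos m)]
      · rw [Real.rpow_def_of_pos hx₀pos, mul_comm]
    -- pointwise exponent inequality
    have hp := pinsker hθ hθa hlt
    rw [show a - θ = ε from by rw [ha]; ring] at hp
    have l1 : Real.log ((1 - θ) / (1 - a)) = Real.log (1 - θ) - Real.log (1 - a) :=
      Real.log_div (ne_of_gt h1θ) (ne_of_gt h1a)
    have l2 : Real.log (a / θ) = Real.log a - Real.log θ :=
      Real.log_div (ne_of_gt ha0) (ne_of_gt hθ)
    have l3 : Real.log ((1 - a) / (1 - θ)) = Real.log (1 - a) - Real.log (1 - θ) :=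
      Real.log_div (ne_of_gt h1a) (ne_of_gt h1θ)
    have l4 : Real.log x₀ = Real.log a + Real.log (1 - θ) - Real.log (1 - a) - Real.log θ := by
      rw [hx₀def, Real.log_div (ne_of_gt hnum) (ne_of_gt hden),
        Real.log_mul (ne_of_gt ha0) (ne_of_gt h1θ),
        Real.log_mul (ne_of_gt h1a) (ne_of_gt hθ)]
      ring
    rw [l2, l3] at hp
    have hpoint : Real.log ((1 - θ) / (1 - a)) - a * Real.log x₀ ≤ -(2 * ε ^ 2) := by
      rw [l1, l4]
      linarith [hp]
    have hexp_le : (m : ℝ) * Real.log ((1 - θ) / (1 - a)) - a * (m : ℝ) * Real.log x₀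
        ≤ -2 * ε ^ 2 * θ * S₁ := by
      have h2 : (m : ℝ) * (Real.log ((1 - θ) / (1 - a)) - a * Real.log x₀)
          ≤ (m : ℝ) * (-(2 * ε ^ 2)) :=
        mul_le_mul_of_nonneg_left hpoint (le_of_lt hmR)
      have h3 : -2 * ε ^ 2 * θ * (S₁ : ℝ) = (m : ℝ) * (-(2 * ε ^ 2)) := by
        linear_combination (2 * ε ^ 2) * hm
      rw [h3]
      linarith [h2]
    calc (∑ t ∈ F, ((m.choose t : ℝ) * ((S₁ - m).choose (m - t) : ℝ) / (S₁.choose m : ℝ)))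
        ≤ (1 - θ + θ * x₀) ^ m / x₀ ^ (a * (m : ℝ)) := htail_le
      _ = Real.exp ((m : ℝ) * Real.log ((1 - θ) / (1 - a)) - a * (m : ℝ) * Real.log x₀) := hexp_eq
      _ ≤ Real.exp (-2 * ε ^ 2 * θ * S₁) := Real.exp_le_exp.mpr hexp_le
  · -- a = 1
    have hε1 : ε = 1 - θ := by rw [ha] at heq; linarith
    set E : ℝ := Real.exp (-(2 * ε ^ 2)) with hE
    have hθE : θ < E := by
      rw [hE, hε1]
      exact theta_lt_exp θ hθ hθ1
    have hEd : (0 : ℝ) < E - θ := by linarith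
    have hE1 : E ≤ 1 := by
      rw [hE]
      calc Real.exp (-(2 * ε ^ 2)) ≤ Real.exp 0 := Real.exp_le_exp.mpr (by nlinarith)
        _ = 1 := Real.exp_zero
    set x₁ : ℝ := (1 - θ) / (E - θ) with hx₁def
    have hx₁pos : 0 < x₁ := div_pos (by linarith) hEd
    have hx₁ : 1 ≤ x₁ := by
      rw [hx₁def, le_div_iff₀ hEd]
      linarith
    have hmast := master x₁ hx₁
    have hval : 1 - θ + θ * x₁ = E * x₁ := by
      rw [hx₁def]
      field_simp
      ring
    rw [hval, heq, one_mul, Real.rpow_natCast, mul_pow] at hmast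
    have hx₁pow : (0 : ℝ) < x₁ ^ m := by positivity
    have htail : (∑ t ∈ F, ((m.choose t : ℝ) * ((S₁ - m).choose (m - t) : ℝ) / (S₁.choose m : ℝ)))
        ≤ E ^ m := by
      have := hmast
      have h2 : (∑ t ∈ F, ((m.choose t : ℝ) * ((S₁ - m).choose (m - t) : ℝ) / (S₁.choose m : ℝ)))
          * x₁ ^ m ≤ E ^ m * x₁ ^ m := hmast
      exact le_of_mul_le_mul_right h2 hx₁pow
    rw [hexp_target]
    exact htail
  · -- a > 1 : empty filter
    have hempty : F = ∅ := by
      rw [hF]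
      apply Finset.filter_false_of_mem
      intro t ht
      rw [Finset.mem_range] at ht
      intro hcon
      have htm : (t : ℝ) ≤ m := by
        have : t ≤ m := by omega
        exact_mod_cast this
      rw [ham] at hcon
      nlinarith
    rw [hempty]
    simp
    positivity
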